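/- Atomic prefixing is commutative up to weak atomic equivalence: α.β.M ≈ β.α.M for all actions α, β and atomic expressions M. -/

import Mathlib

/-- Actions: reads and writes of names. -/
inductive Act (N : Type*) where
  | rd (a : N)
  | wt (a : N)

/-- Multiset of names written in a log. -/
def Wl {N : Type*} : List (Act N) → Multiset N
  | [] => 0
  | .wt a :: δ => Wl δ + {a}
  | .rd _ :: δ => Wl δ

/-- Multiset of names read in a log. -/
def Rl {N : Type*} : List (Act N) → Multiset N
  | [] => 0
  | .rd a :: δ => Rl δ + {a}
  | .wt _ :: δ => Rl δ

/-- Atomic expressions. -/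
inductive Expr (N : Type*) where
  | done
  | retry
  | rd (a : N) (M : Expr N)
  | wt (a : N) (M : Expr N)
  | orElse (M₁ M₂ : Expr N)

/-- Ongoing atomic expressions. -/
inductive Ong (N : Type*) where
  | block (M : Expr N) (σ : Multiset N) (δ : List (Act N))
  | orElse (A B : Ong N)

/-- One-step reduction of ongoing expressions. -/
inductive Step {N : Type*} : Ong N → Ong N → Prop where
  | rdOk {a : N} {M σ δ} (h : Rl δ + {a} ≤ σ) :
      Step (.block (.rd a M) σ δ) (.block M σ (δ ++ [.rd a]))
  | rdFail {a : N} {M σ δ} (h : ¬ Rl δ + {a} ≤ σ) :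
      Step (.block (.rd a M) σ δ) (.block .retry σ δ)
  | wr {a : N} {M σ δ} :
      Step (.block (.wt a M) σ δ) (.block M σ (δ ++ [.wt a]))
  | orE {M₁ M₂ : Expr N} {σ δ} :
      Step (.block (.orElse M₁ M₂) σ δ) (.orElse (.block M₁ σ δ) (.block M₂ σ δ))
  | orFail {σ : Multiset N} {δ B} : Step (.orElse (.block .retry σ δ) B) B
  | orEnd {σ : Multiset N} {δ B} : Step (.orElse (.block .done σ δ) B) (.block .done σ δ)
  | congL {A A' B : Ong N} (h : Step A A') : Step (.orElse A B) (.orElse A' B)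
  | congR {A B B' : Ong N} (h : Step B B') : Step (.orElse A B) (.orElse A B')

/-- Multi-step reduction. -/
def Steps {N : Type*} : Ong N → Ong N → Prop := Relation.ReflTransGen Step

/-- Logs with the same effect on state σ. -/
def EffEq {N : Type*} [DecidableEq N] (σ : Multiset N) (δ δ' : List (Act N)) : Prop :=
  σ - Rl δ + Wl δ = σ - Rl δ' + Wl δ'

/-- Weak atomic equivalence. -/
def AEq {N : Type*} [DecidableEq N] (M M' : Expr N) : Prop :=
  ∀ σ : Multiset N,
    ((∃ δ, Steps (.block M σ []) (.block .retry σ δ)) ∧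
     (∃ δ', Steps (.block M' σ []) (.block .retry σ δ'))) ∨
    (∃ δ δ', Steps (.block M σ []) (.block .done σ δ) ∧
             Steps (.block M' σ []) (.block .done σ δ') ∧ EffEq σ δ δ')

/-- Prefixing an action onto an expression. -/
def pre {N : Type*} : Act N → Expr N → Expr N
  | .rd a, M => .rd a M
  | .wt a, M => .wt a M

/-- The pure sequence expression α₁.….αₙ.end. -/
def seq {N : Type*} (K : List (Act N)) : Expr N := K.foldr pre .done

/-- Right-nested orElse of a nonempty list of expressions. -/
def ors {N : Type*} : Expr N → List (Expr N) → Expr N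
  | M, [] => M
  | M, M' :: rest => .orElse M (ors M' rest)

section Aux

variable {N : Type*} [DecidableEq N]

lemma Rl_append (δ γ : List (Act N)) : Rl (δ ++ γ) = Rl δ + Rl γ := by
  induction δ with
  | nil => simp [Rl]
  | cons x δ ih => cases x with
    | rd a => simp [Rl, ih, add_right_comm]
    | wt a => simp [Rl, ih]

lemma Wl_append (δ γ : List (Act N)) : Wl (δ ++ γ) = Wl δ + Wl γ := by
  induction δ with
  | nil => simp [Wl]
  | cons x δ ih => cases x with
    | rd a => simp [Wl, ih]
    | wt a => simp [Wl, ih, add_right_comm]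

open Classical in
/-- Deterministic evaluator: `some γ` for commit with final log `γ`, `none` for retry. -/
noncomputable def eval (σ : Multiset N) : Expr N → List (Act N) → Option (List (Act N))
  | .done, δ => some δ
  | .retry, _ => none
  | .rd a M, δ => if Rl δ + {a} ≤ σ then eval σ M (δ ++ [.rd a]) else none
  | .wt a M, δ => eval σ M (δ ++ [.wt a])
  | .orElse M₁ M₂, δ =>
      match eval σ M₁ δ with
      | some γ => some γ
      | none => eval σ M₂ δ

lemma stepsOrL {A A' B : Ong N} (h : Steps A A') :
    Steps (Ong.orElse A B) (Ong.orElse A' B) :=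
  Relation.ReflTransGen.lift (fun X => Ong.orElse X B) (fun _ _ h => Step.congL h) _ _ h

lemma toRetry (σ : Multiset N) (M : Expr N) : ∀ δ : List (Act N), eval σ M δ = none →
    ∃ γ, Steps (Ong.block M σ δ) (Ong.block .retry σ γ) := by
  induction M with
  | done => intro δ h; simp [eval] at h
  | retry => intro δ _; exact ⟨δ, Relation.ReflTransGen.refl⟩
  | rd a M ih =>
    intro δ h
    rw [eval] at h
    by_cases hc : Rl δ + {a} ≤ σ
    · rw [if_pos hc] at h
      obtain ⟨γ, hs⟩ := ih _ h
      exact ⟨γ, Relation.ReflTransGen.head (Step.rdOk hc) hs⟩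
    · exact ⟨δ, Relation.ReflTransGen.single (Step.rdFail hc)⟩
  | wt a M ih =>
    intro δ h
    rw [eval] at h
    obtain ⟨γ, hs⟩ := ih _ h
    exact ⟨γ, Relation.ReflTransGen.head Step.wr hs⟩
  | orElse M₁ M₂ ih₁ ih₂ =>
    intro δ h
    rw [eval] at h
    cases h1 : eval σ M₁ δ with
    | some γ => rw [h1] at h; simp at h
    | none =>
      rw [h1] at h
      obtain ⟨γ₁, hs₁⟩ := ih₁ _ h1
      obtain ⟨γ₂, hs₂⟩ := ih₂ _ h
      exact ⟨γ₂, Relation.ReflTransGen.head Step.orE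
        ((stepsOrL hs₁).trans (Relation.ReflTransGen.head Step.orFail hs₂))⟩

lemma toDone (σ : Multiset N) (M : Expr N) : ∀ (δ γ : List (Act N)), eval σ M δ = some γ →
    Steps (Ong.block M σ δ) (Ong.block .done σ γ) := by
  induction M with
  | done =>
    intro δ γ h; rw [eval] at h
    cases h; exact Relation.ReflTransGen.refl
  | retry => intro δ γ h; simp [eval] at h
  | rd a M ih =>
    intro δ γ h
    rw [eval] at h
    by_cases hc : Rl δ + {a} ≤ σ
    · rw [if_pos hc] at h
      exact Relation.ReflTransGen.head (Step.rdOk hc) (ih _ _ h)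
    · rw [if_neg hc] at h; simp at h
  | wt a M ih =>
    intro δ γ h
    rw [eval] at h
    exact Relation.ReflTransGen.head Step.wr (ih _ _ h)
  | orElse M₁ M₂ ih₁ ih₂ =>
    intro δ γ h
    rw [eval] at h
    cases h1 : eval σ M₁ δ with
    | some γ₁ =>
      rw [h1] at h
      cases h
      exact Relation.ReflTransGen.head Step.orE
        ((stepsOrL (ih₁ _ _ h1)).trans (Relation.ReflTransGen.single Step.orEnd))
    | none =>
      rw [h1] at h
      obtain ⟨γ₁, hs₁⟩ := toRetry σ M₁ _ h1
      exact Relation.ReflTransGen.head Step.orE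
        ((stepsOrL hs₁).trans (Relation.ReflTransGen.head Step.orFail (ih₂ _ _ h)))

/-- Evaluation only depends on the log through its read/write multisets. -/
lemma eval_congr (σ : Multiset N) (M : Expr N) :
    ∀ δ δ' : List (Act N), Rl δ = Rl δ' → Wl δ = Wl δ' →
    (eval σ M δ = none ∧ eval σ M δ' = none) ∨
    (∃ γ γ', eval σ M δ = some γ ∧ eval σ M δ' = some γ' ∧ Rl γ = Rl γ' ∧ Wl γ = Wl γ') := by
  induction M with
  | done => intro δ δ' hR hW; exact .inr ⟨δ, δ', rfl, rfl, hR, hW⟩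
  | retry => intro δ δ' _ _; exact .inl ⟨rfl, rfl⟩
  | rd a M ih =>
    intro δ δ' hR hW
    by_cases hc : Rl δ + {a} ≤ σ
    · have hc' : Rl δ' + {a} ≤ σ := hR ▸ hc
      have := ih (δ ++ [.rd a]) (δ' ++ [.rd a])
        (by simp [Rl_append, hR]) (by simp [Wl_append, hW])
      rw [eval, if_pos hc]
      rw [show eval σ (Expr.rd a M) δ' = eval σ M (δ' ++ [.rd a]) by rw [eval, if_pos hc']]
      exact this
    · have hc' : ¬ Rl δ' + {a} ≤ σ := hR ▸ hc
      left
      constructor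
      · rw [eval, if_neg hc]
      · rw [eval, if_neg hc']
  | wt a M ih =>
    intro δ δ' hR hW
    have := ih (δ ++ [.wt a]) (δ' ++ [.wt a])
      (by simp [Rl_append, hR]) (by simp [Wl_append, hW])
    rw [eval]
    rw [show eval σ (Expr.wt a M) δ' = eval σ M (δ' ++ [.wt a]) from rfl]
    exact this
  | orElse M₁ M₂ ih₁ ih₂ =>
    intro δ δ' hR hW
    rcases ih₁ δ δ' hR hW with ⟨h1, h1'⟩ | ⟨γ, γ', h1, h1', hRγ, hWγ⟩
    · rcases ih₂ δ δ' hR hW with ⟨h2, h2'⟩ | ⟨γ, γ', h2, h2', hRγ, hWγ⟩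
      · left; constructor
        · rw [eval, h1]; exact h2
        · rw [eval, h1']; exact h2'
      · right; exact ⟨γ, γ', by rw [eval, h1]; exact h2, by rw [eval, h1']; exact h2', hRγ, hWγ⟩
    · right; exact ⟨γ, γ', by rw [eval, h1], by rw [eval, h1'], hRγ, hWγ⟩

end Aux

/-- Atomic prefixing is commutative up to weak atomic equivalence: α.β.M ≈ β.α.M. -/
theorem stmt8 {N : Type*} [DecidableEq N] (α β : Act N) (M : Expr N) :
    AEq (pre α (pre β M)) (pre β (pre α M)) := by
  intro σ
  have key :
      (eval σ (pre α (pre β M)) [] = none ∧ eval σ (pre β (pre α M)) [] = none) ∨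
      (∃ γ γ', eval σ (pre α (pre β M)) [] = some γ ∧ eval σ (pre β (pre α M)) [] = some γ' ∧
        Rl γ = Rl γ' ∧ Wl γ = Wl γ') := by
    cases α with
    | rd a =>
      cases β with
      | rd b =>
        by_cases hab : ({a} : Multiset N) + {b} ≤ σ
        · have ha : ({a} : Multiset N) ≤ σ := le_trans (Multiset.le_add_right _ _) hab
          have hb : ({b} : Multiset N) ≤ σ := le_trans (Multiset.le_add_left _ _) hab
          have hba : ({b} : Multiset N) + {a} ≤ σ := by rwa [add_comm]
          have key' := eval_congr σ M ([] ++ [Act.rd a] ++ [Act.rd b])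
            ([] ++ [Act.rd b] ++ [Act.rd a]) (by simp [Rl, add_comm]) (by simp [Wl])
          have e1 : eval σ (pre (Act.rd a) (pre (Act.rd b) M)) [] =
              eval σ M ([] ++ [Act.rd a] ++ [Act.rd b]) := by
            rw [pre, pre, eval, if_pos (by simpa [Rl] using ha),
              eval, if_pos (by simpa [Rl] using hab)]
          have e2 : eval σ (pre (Act.rd b) (pre (Act.rd a) M)) [] =
              eval σ M ([] ++ [Act.rd b] ++ [Act.rd a]) := by
            rw [pre, pre, eval, if_pos (by simpa [Rl] using hb),
              eval, if_pos (by simpa [Rl] using hba)]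
          rw [e1, e2]
          exact key'
        · have hba : ¬ ({b} : Multiset N) + {a} ≤ σ := by rwa [add_comm]
          left
          constructor
          · by_cases ha : ({a} : Multiset N) ≤ σ
            · rw [pre, pre, eval, if_pos (by simpa [Rl] using ha),
                eval, if_neg (by simpa [Rl] using hab)]
            · rw [pre, pre, eval, if_neg (by simpa [Rl] using ha)]
          · by_cases hb : ({b} : Multiset N) ≤ σ
            · rw [pre, pre, eval, if_pos (by simpa [Rl] using hb),
                eval, if_neg (by simpa [Rl] using hba)]
            · rw [pre, pre, eval, if_neg (by simpa [Rl] using hb)]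
      | wt b =>
        by_cases ha : ({a} : Multiset N) ≤ σ
        · have key' := eval_congr σ M ([] ++ [Act.rd a] ++ [Act.wt b])
            ([] ++ [Act.wt b] ++ [Act.rd a]) (by simp [Rl]) (by simp [Wl])
          have e1 : eval σ (pre (Act.rd a) (pre (Act.wt b) M)) [] =
              eval σ M ([] ++ [Act.rd a] ++ [Act.wt b]) := by
            rw [pre, pre, eval, if_pos (by simpa [Rl] using ha), eval]
          have e2 : eval σ (pre (Act.wt b) (pre (Act.rd a) M)) [] =
              eval σ M ([] ++ [Act.wt b] ++ [Act.rd a]) := by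
            rw [pre, pre, eval, eval, if_pos (by simpa [Rl] using ha)]
          rw [e1, e2]
          exact key'
        · left
          constructor
          · rw [pre, pre, eval, if_neg (by simpa [Rl] using ha)]
          · rw [pre, pre, eval, eval, if_neg (by simpa [Rl] using ha)]
    | wt a =>
      cases β with
      | rd b =>
        by_cases hb : ({b} : Multiset N) ≤ σ
        · have key' := eval_congr σ M ([] ++ [Act.wt a] ++ [Act.rd b])
            ([] ++ [Act.rd b] ++ [Act.wt a]) (by simp [Rl]) (by simp [Wl])
          have e1 : eval σ (pre (Act.wt a) (pre (Act.rd b) M)) [] =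
              eval σ M ([] ++ [Act.wt a] ++ [Act.rd b]) := by
            rw [pre, pre, eval, eval, if_pos (by simpa [Rl] using hb)]
          have e2 : eval σ (pre (Act.rd b) (pre (Act.wt a) M)) [] =
              eval σ M ([] ++ [Act.rd b] ++ [Act.wt a]) := by
            rw [pre, pre, eval, if_pos (by simpa [Rl] using hb), eval]
          rw [e1, e2]
          exact key'
        · left
          constructor
          · rw [pre, pre, eval, eval, if_neg (by simpa [Rl] using hb)]
          · rw [pre, pre, eval, if_neg (by simpa [Rl] using hb)]
      | wt b =>
        have key' := eval_congr σ M ([] ++ [Act.wt a] ++ [Act.wt b])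
          ([] ++ [Act.wt b] ++ [Act.wt a]) (by simp [Rl]) (by simp [Wl, add_comm])
        have e1 : eval σ (pre (Act.wt a) (pre (Act.wt b) M)) [] =
            eval σ M ([] ++ [Act.wt a] ++ [Act.wt b]) := by rw [pre, pre, eval, eval]
        have e2 : eval σ (pre (Act.wt b) (pre (Act.wt a) M)) [] =
            eval σ M ([] ++ [Act.wt b] ++ [Act.wt a]) := by rw [pre, pre, eval, eval]
        rw [e1, e2]
        exact key'
  rcases key with ⟨h, h'⟩ | ⟨γ, γ', h, h', hR, hW⟩
  · exact .inl ⟨toRetry σ _ _ h, toRetry σ _ _ h'⟩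
  · exact .inr ⟨γ, γ', toDone σ _ _ _ h, toDone σ _ _ _ h', by unfold EffEq; rw [hR, hW]⟩
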